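/- Let p ∈ [1,∞), γ ∈ (−p−1, −1), and let u ∈ 𝒮(ℝ) (Schwartz) restricted to [0,∞) satisfy u(0) = 0 and u″(0) = 0. Then u and u″ belong to L^p((0,∞), w_γ), and u belongs to W^{2,p}((0,∞), w_γ) if and only if u′(0) = 0, where w_γ(x) = x^γ. -/

import Mathlib

open MeasureTheory Set

lemma aux_meas (g : ℝ → ℝ) (hg : Continuous g) (p γ : ℝ) (hp : 0 ≤ p)
    {s : Set ℝ} (hs : MeasurableSet s) (hsub : s ⊆ Ioi 0) :
    AEStronglyMeasurable (fun x => |g x| ^ p * x ^ γ) (volume.restrict s) := by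
  apply ContinuousOn.aestronglyMeasurable _ hs
  apply ContinuousOn.mul
  · exact (hg.abs.rpow_const (fun x => Or.inr hp)).continuousOn
  · exact fun x hx => (Real.continuousAt_rpow_const x γ
      (Or.inl (ne_of_gt (hsub hx)))).continuousWithinAt

lemma aux_integrable (p γ : ℝ) (hp : 1 ≤ p) (h1 : -p - 1 < γ) (h2 : γ < -1)
    (g : SchwartzMap ℝ ℝ) (hg0 : g 0 = 0) :
    IntegrableOn (fun x => |g x| ^ p * x ^ γ) (Ioi 0) := by
  have hp0 : (0:ℝ) ≤ p := le_trans zero_le_one hp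
  have hcont : Continuous (⇑g) := g.continuous
  rw [← Ioc_union_Ioi_eq_Ioi (zero_le_one' ℝ)]
  apply IntegrableOn.union
  · -- near zero: |g x| ≤ M x
    set M : ℝ := SchwartzMap.seminorm ℝ 0 0 (SchwartzMap.derivCLM ℝ ℝ g) with hM
    have hM0 : 0 ≤ M := apply_nonneg _ _
    have hbound : ∀ x : ℝ, |g x| ≤ M * |x| := by
      intro x
      have := Convex.norm_image_sub_le_of_norm_deriv_le (s := (univ : Set ℝ))
        (f := ⇑g) (C := M) (fun y _ => g.differentiableAt)
        (fun y _ => by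
          have := SchwartzMap.norm_le_seminorm ℝ (SchwartzMap.derivCLM ℝ ℝ g) y
          simpa [SchwartzMap.derivCLM_apply] using this)
        convex_univ (mem_univ 0) (mem_univ x)
      simpa [hg0, Real.norm_eq_abs] using this
    have hint : IntegrableOn (fun x : ℝ => M ^ p * x ^ (p + γ)) (Ioc 0 1) := by
      have : IntervalIntegrable (fun x : ℝ => x ^ (p + γ)) volume 0 1 :=
        intervalIntegral.intervalIntegrable_rpow' (by linarith)
      exact ((intervalIntegrable_iff_integrableOn_Ioc_of_le zero_le_one).mp this).const_mul _
    apply Integrable.mono hint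
    · exact aux_meas _ hcont p γ hp0 measurableSet_Ioc Ioc_subset_Ioi_self
    · filter_upwards [ae_restrict_mem measurableSet_Ioc] with x hx
      have hx0 : 0 < x := hx.1
      have h1' : |g x| ^ p ≤ (M * x) ^ p := by
        apply Real.rpow_le_rpow (abs_nonneg _) _ hp0
        simpa [abs_of_pos hx0] using hbound x
      have hxg : (0:ℝ) ≤ x ^ γ := Real.rpow_nonneg hx0.le γ
      rw [Real.norm_eq_abs, Real.norm_eq_abs, abs_of_nonneg
        (mul_nonneg (Real.rpow_nonneg (abs_nonneg _) _) hxg),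
        abs_of_nonneg (mul_nonneg (Real.rpow_nonneg hM0 _) (Real.rpow_nonneg hx0.le _))]
      calc |g x| ^ p * x ^ γ ≤ (M * x) ^ p * x ^ γ :=
              mul_le_mul_of_nonneg_right h1' hxg
          _ = M ^ p * x ^ (p + γ) := by
              rw [Real.mul_rpow hM0 hx0.le, mul_assoc, ← Real.rpow_add hx0]
  · -- tail: |g x| ≤ M
    set M : ℝ := SchwartzMap.seminorm ℝ 0 0 g with hM
    have hM0 : 0 ≤ M := apply_nonneg _ _
    have hint : IntegrableOn (fun x : ℝ => M ^ p * x ^ γ) (Ioi 1) :=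
      (integrableOn_Ioi_rpow_of_lt h2 one_pos).const_mul _
    apply Integrable.mono hint
    · exact aux_meas _ hcont p γ hp0 measurableSet_Ioi (Ioi_subset_Ioi zero_le_one)
    · filter_upwards [ae_restrict_mem measurableSet_Ioi] with x hx
      have hx0 : (0:ℝ) < x := lt_trans one_pos hx
      have h1' : |g x| ^ p ≤ M ^ p := by
        apply Real.rpow_le_rpow (abs_nonneg _) _ hp0
        simpa [Real.norm_eq_abs] using SchwartzMap.norm_le_seminorm ℝ g x
      have hxg : (0:ℝ) ≤ x ^ γ := Real.rpow_nonneg hx0.le γ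
      rw [Real.norm_eq_abs, Real.norm_eq_abs,
        abs_of_nonneg (mul_nonneg (Real.rpow_nonneg (abs_nonneg _) _) hxg),
        abs_of_nonneg (mul_nonneg (Real.rpow_nonneg hM0 _) hxg)]
      exact mul_le_mul_of_nonneg_right h1' hxg

lemma aux_not_integrable (p γ : ℝ) (hp : 1 ≤ p) (h2 : γ < -1)
    (g : ℝ → ℝ) (hg : Continuous g) (hg0 : g 0 ≠ 0) :
    ¬ IntegrableOn (fun x => |g x| ^ p * x ^ γ) (Ioi 0) := by
  intro hint
  have hc : 0 < |g 0| := abs_pos.mpr hg0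
  obtain ⟨δ, hδ0, hδ⟩ := Metric.continuousAt_iff.mp (hg.continuousAt (x := (0:ℝ))) (|g 0| / 2) (by linarith)
  have hlow : ∀ x ∈ Ioo (0:ℝ) δ, |g 0| / 2 ≤ |g x| := by
    intro x hx
    have hdx : dist x 0 < δ := by
      rw [Real.dist_eq, sub_zero, abs_of_pos hx.1]; exact hx.2
    have hz := hδ hdx
    rw [Real.dist_eq] at hz
    have h2 := abs_sub_abs_le_abs_sub (g 0) (g x)
    rw [abs_sub_comm (g 0) (g x)] at h2
    linarith
  set c : ℝ := (|g 0| / 2) ^ p with hcdef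
  have hc0 : 0 < c := Real.rpow_pos_of_pos (by linarith) p
  have hint2 : IntegrableOn (fun x : ℝ => c * x ^ γ) (Ioo 0 δ) := by
    apply Integrable.mono (hint.mono_set (fun x hx => hx.1))
    · apply ContinuousOn.aestronglyMeasurable _ measurableSet_Ioo
      apply ContinuousOn.mul continuousOn_const
      exact fun x hx => (Real.continuousAt_rpow_const x γ
        (Or.inl (ne_of_gt hx.1))).continuousWithinAt
    · filter_upwards [ae_restrict_mem measurableSet_Ioo] with x hx
      have hx0 : 0 < x := hx.1
      have hxg : (0:ℝ) ≤ x ^ γ := Real.rpow_nonneg hx0.le γ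
      rw [Real.norm_eq_abs, Real.norm_eq_abs, abs_of_nonneg (mul_nonneg hc0.le hxg),
        abs_of_nonneg (mul_nonneg (Real.rpow_nonneg (abs_nonneg _) _) hxg)]
      apply mul_le_mul_of_nonneg_right _ hxg
      exact Real.rpow_le_rpow (by linarith) (hlow x hx) (le_trans zero_le_one hp)
  have hint3 : IntegrableOn (fun x : ℝ => x ^ γ) (Ioo 0 δ) := by
    have := hint2.const_mul c⁻¹
    simpa [IntegrableOn, ← mul_assoc, inv_mul_cancel₀ hc0.ne'] using this
  rw [intervalIntegral.integrableOn_Ioo_rpow_iff hδ0] at hint3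
  linarith

theorem stmt_14 (p γ : ℝ) (hp : 1 ≤ p) (h1 : -p - 1 < γ) (h2 : γ < -1)
    (f : SchwartzMap ℝ ℝ) (h0 : f 0 = 0) (h0'' : deriv (deriv (⇑f)) 0 = 0) :
    IntegrableOn (fun x => |f x| ^ p * x ^ γ) (Ioi 0) ∧
    IntegrableOn (fun x => |deriv (deriv (⇑f)) x| ^ p * x ^ γ) (Ioi 0) ∧
    (IntegrableOn (fun x => |deriv (⇑f) x| ^ p * x ^ γ) (Ioi 0) ↔ deriv (⇑f) 0 = 0) := by
  have hd1 : ⇑(SchwartzMap.derivCLM ℝ ℝ f) = deriv (⇑f) := by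
    ext x; exact SchwartzMap.derivCLM_apply ℝ f x
  have hd2 : ⇑(SchwartzMap.derivCLM ℝ ℝ (SchwartzMap.derivCLM ℝ ℝ f)) = deriv (deriv (⇑f)) := by
    ext x; rw [SchwartzMap.derivCLM_apply, hd1]
  refine ⟨aux_integrable p γ hp h1 h2 f h0, ?_, ?_, ?_⟩
  · have := aux_integrable p γ hp h1 h2 (SchwartzMap.derivCLM ℝ ℝ (SchwartzMap.derivCLM ℝ ℝ f))
      (by rw [show ((SchwartzMap.derivCLM ℝ ℝ (SchwartzMap.derivCLM ℝ ℝ f)) 0 : ℝ) =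
        deriv (deriv (⇑f)) 0 from congrFun hd2 0]; exact h0'')
    rwa [hd2] at this
  · intro hI
    by_contra hne
    exact aux_not_integrable p γ hp h2 (deriv (⇑f))
      (hd1 ▸ (SchwartzMap.derivCLM ℝ ℝ f).continuous) hne hI
  · intro h0'
    have := aux_integrable p γ hp h1 h2 (SchwartzMap.derivCLM ℝ ℝ f)
      (by rw [show ((SchwartzMap.derivCLM ℝ ℝ f) 0 : ℝ) = deriv (⇑f) 0 from congrFun hd1 0]
          exact h0')
    rwa [hd1] at this
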